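/- Let G be an r-regular non-complete connected graph on p vertices with adjacency eigenvalues r = λ₁, λ₂, ..., λ_p. Then the eccentricity matrix of the join G ∨ K₁ has eigenvalues (p−r−1) ± √((p−r−1)² + p), each with multiplicity 1, together with −2(λ_i + 1) for i = 2, ..., p. -/

import Mathlib

open SimpleGraph Matrix Finset

attribute [local instance] Fintype.ofFinite Classical.propDecidable

noncomputable section

/-- Eccentricity of a vertex: maximum distance to any vertex. -/
def ecc {V : Type*} [Fintype V] (G : SimpleGraph V) (v : V) : ℕ :=
  Finset.univ.sup (fun w => G.dist v w)

/-- Diameter: maximum eccentricity. -/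
def gdiam {V : Type*} [Fintype V] (G : SimpleGraph V) : ℕ :=
  Finset.univ.sup (fun v => ecc G v)

/-- The eccentricity matrix. -/
def eccMatrix {V : Type*} [Fintype V] (G : SimpleGraph V) : Matrix V V ℝ :=
  fun u v => if G.dist u v = min (ecc G u) (ecc G v) then (G.dist u v : ℝ) else 0

/-- Join of two graphs. -/
def joinGraph {V₁ V₂ : Type*} (G₁ : SimpleGraph V₁) (G₂ : SimpleGraph V₂) :
    SimpleGraph (V₁ ⊕ V₂) :=
  SimpleGraph.fromRel (fun x y =>
    match x, y with
    | Sum.inl a, Sum.inl b => G₁.Adj a b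
    | Sum.inr a, Sum.inr b => G₂.Adj a b
    | Sum.inl _, Sum.inr _ => True
    | Sum.inr _, Sum.inl _ => False)

/-- Disjoint union of two graphs. -/
def disjUnion {V₁ V₂ : Type*} (G₁ : SimpleGraph V₁) (G₂ : SimpleGraph V₂) :
    SimpleGraph (V₁ ⊕ V₂) :=
  SimpleGraph.fromRel (fun x y =>
    match x, y with
    | Sum.inl a, Sum.inl b => G₁.Adj a b
    | Sum.inr a, Sum.inr b => G₂.Adj a b
    | _, _ => False)

/-- Subdivision-vertex join `G₁ ∨̇ G₂`: take the subdivision of `G₁` (original vertices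
`V₁`, one new vertex for every edge) and join every original vertex of `G₁` to every
vertex of `G₂`. -/
def subVertexJoin {V₁ V₂ : Type*} (G₁ : SimpleGraph V₁) (G₂ : SimpleGraph V₂) :
    SimpleGraph ((V₁ ⊕ G₁.edgeSet) ⊕ V₂) :=
  SimpleGraph.fromRel (fun x y =>
    match x, y with
    | Sum.inl (Sum.inl v), Sum.inl (Sum.inr e) => v ∈ (e : Sym2 V₁)
    | Sum.inl (Sum.inl _), Sum.inr _ => True
    | Sum.inr a, Sum.inr b => G₂.Adj a b
    | _, _ => False)

/-- Subdivision-edge join `G₁ ⊻ G₂`: take the subdivision of `G₁` and join every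
subdivision (inserted) vertex of `G₁` to every vertex of `G₂`. -/
def subEdgeJoin {V₁ V₂ : Type*} (G₁ : SimpleGraph V₁) (G₂ : SimpleGraph V₂) :
    SimpleGraph ((V₁ ⊕ G₁.edgeSet) ⊕ V₂) :=
  SimpleGraph.fromRel (fun x y =>
    match x, y with
    | Sum.inl (Sum.inl v), Sum.inl (Sum.inr e) => v ∈ (e : Sym2 V₁)
    | Sum.inl (Sum.inr _), Sum.inr _ => True
    | Sum.inr a, Sum.inr b => G₂.Adj a b
    | _, _ => False)

/-- Line graph: vertices are edges of `G`, adjacent iff they share an endpoint. -/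
def lineG {V : Type*} (G : SimpleGraph V) : SimpleGraph G.edgeSet :=
  SimpleGraph.fromRel (fun e f => ∃ v, v ∈ (e : Sym2 V) ∧ v ∈ (f : Sym2 V))

/-- Incidence matrix of a graph. -/
def incMat {V : Type*} [Fintype V] (G : SimpleGraph V) : Matrix V G.edgeSet ℝ :=
  fun v e => if v ∈ (e : Sym2 V) then 1 else 0

/-- All-ones matrix. -/
def Jmat (m n : Type*) : Matrix m n ℝ := Matrix.of (fun _ _ => (1 : ℝ))

/-- A symmetric matrix is irreducible iff it is not permutation-similar to a
nontrivial block upper-triangular matrix, i.e. there is no nontrivial vertex split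
with all cross entries zero. -/
def MatIrreducible {n : Type*} (M : Matrix n n ℝ) : Prop :=
  ∀ S : Set n, S.Nonempty → Sᶜ.Nonempty → ∃ u ∈ S, ∃ v ∈ Sᶜ, M u v ≠ 0

/-- `μ` is an eigenvalue of `M`. -/
def IsEigenvalue {n : Type*} [Fintype n] (M : Matrix n n ℝ) (μ : ℝ) : Prop :=
  ∃ v : n → ℝ, v ≠ 0 ∧ M.mulVec v = μ • v

/-- Eigenspace of `M` for `μ`. -/
def eigSpace {n : Type*} [Fintype n] (M : Matrix n n ℝ) (μ : ℝ) :
    Submodule ℝ (n → ℝ) :=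
  LinearMap.ker (M.mulVecLin - μ • LinearMap.id)

/-- Eccentricity energy: sum of absolute values of the eccentricity eigenvalues. -/
def eccEnergy {V : Type*} [Fintype V] (G : SimpleGraph V) : ℝ :=
  ((eccMatrix G).charpoly.roots.map (fun x => |x|)).sum

/-- Eccentricity Wiener index: half the sum of the entries of the eccentricity matrix. -/
def eccWiener {V : Type*} [Fintype V] (G : SimpleGraph V) : ℝ :=
  (∑ u, ∑ v, eccMatrix G u v) / 2

end

section Helpers
open Polynomial Matrix

lemma eval_charpoly' {n : Type*} [Fintype n] [DecidableEq n] (M : Matrix n n ℝ) (x : ℝ) :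
    M.charpoly.eval x = (x • (1 : Matrix n n ℝ) - M).det := by
  rw [Matrix.charpoly, ← Polynomial.coe_evalRingHom, RingHom.map_det]
  congr 1
  ext i j
  by_cases h : i = j
  · subst h; simp [Matrix.charmatrix_apply_eq, Matrix.one_apply]
  · simp [Matrix.charmatrix_apply_ne _ _ _ h, Matrix.one_apply, h]

lemma charpoly_herm {n : Type*} [Fintype n] [DecidableEq n] (A : Matrix n n ℝ)
    (hA : A.IsHermitian) :
    A.charpoly = ∏ i : n, (X - C (hA.eigenvalues i)) := by
  apply Polynomial.funext
  intro x
  rw [eval_charpoly']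
  have hspec := hA.spectral_theorem
  set U : Matrix n n ℝ := (hA.eigenvectorUnitary : Matrix n n ℝ) with hU
  have hU1 : U * star U = 1 := (Matrix.mem_unitaryGroup_iff).mp hA.eigenvectorUnitary.2
  have hco : (RCLike.ofReal ∘ hA.eigenvalues : n → ℝ) = hA.eigenvalues := by
    funext i; simp
  rw [hco] at hspec
  rw [Unitary.conjStarAlgAut_apply] at hspec
  have key : x • (1 : Matrix n n ℝ) - A
      = U * (x • (1 : Matrix n n ℝ) - Matrix.diagonal hA.eigenvalues) * star U := by
    rw [Matrix.mul_sub, Matrix.sub_mul, ← hspec]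
    congr 1
    rw [Matrix.mul_smul, Matrix.smul_mul, Matrix.mul_one, hU1]
  have hdet1 : U.det * (star U).det = 1 := by
    rw [← Matrix.det_mul, hU1, Matrix.det_one]
  have hdiag : x • (1 : Matrix n n ℝ) - Matrix.diagonal hA.eigenvalues
      = Matrix.diagonal (fun i => x - hA.eigenvalues i) := by
    ext i j
    by_cases h : i = j
    · subst h; simp [Matrix.one_apply]
    · simp [Matrix.one_apply, h, Matrix.diagonal_apply_ne _ h]
  rw [key, Matrix.det_mul, Matrix.det_mul, hdiag, Matrix.det_diagonal,
    Polynomial.eval_prod]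
  simp only [Polynomial.eval_sub, Polynomial.eval_X, Polynomial.eval_C]
  calc U.det * (∏ i, (x - hA.eigenvalues i)) * (star U).det
      = (U.det * (star U).det) * ∏ i, (x - hA.eigenvalues i) := by ring
    _ = _ := by rw [hdet1, one_mul]

lemma charpoly_roots_herm {n : Type*} [Fintype n] [DecidableEq n] (A : Matrix n n ℝ)
    (hA : A.IsHermitian) :
    A.charpoly = (A.charpoly.roots.map (fun a => X - C a)).prod ∧
      A.charpoly.roots.card = Fintype.card n := by
  have h := charpoly_herm A hA
  have hprod : A.charpoly
      = ((Finset.univ.val.map hA.eigenvalues).map (fun a => X - C a)).prod := by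
    rw [h, Finset.prod_eq_multiset_prod, Multiset.map_map]
    rfl
  have hroots : A.charpoly.roots = Finset.univ.val.map hA.eigenvalues := by
    rw [hprod, Polynomial.roots_multiset_prod_X_sub_C]
  constructor
  · rw [hroots]; exact hprod
  · rw [hroots, Multiset.card_map]; rfl

lemma det_rank_one_update {V : Type*} [Fintype V] [DecidableEq V] (B : Matrix V V ℝ) (c s₀ : ℝ)
    (hd : IsUnit B.det) (hs : s₀ ≠ 0)
    (hrow : B *ᵥ (fun _ => (1:ℝ)) = fun _ => s₀) :
    (B + Matrix.replicateCol Unit (fun _ => -c) * Matrix.replicateRow Unit (fun _ => (1:ℝ))).det * s₀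
      = B.det * (s₀ - c * (Fintype.card V)) := by
  have hinv : B⁻¹ *ᵥ (fun _ => (1:ℝ)) = fun _ => s₀⁻¹ := by
    have h1 : B⁻¹ *ᵥ (B *ᵥ (fun _ => (1:ℝ))) = (fun _ => (1:ℝ)) := by
      rw [Matrix.mulVec_mulVec, Matrix.nonsing_inv_mul B hd, Matrix.one_mulVec]
    rw [hrow] at h1
    have h2 : (fun _ : V => s₀) = s₀ • (fun _ : V => (1:ℝ)) := by
      funext v; simp
    rw [h2, Matrix.mulVec_smul] at h1
    funext v
    have h3 := congrFun h1 v
    simp only [Pi.smul_apply, smul_eq_mul] at h3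
    exact eq_inv_of_mul_eq_one_right h3
  have hsum : ∀ u, (∑ v, B⁻¹ u v) = s₀⁻¹ := by
    intro u
    have := congrFun hinv u
    simpa [Matrix.mulVec, dotProduct] using this
  have hdet2 : ((1 : Matrix Unit Unit ℝ) +
      Matrix.replicateRow Unit (fun _ : V => (1:ℝ)) * B⁻¹ * Matrix.replicateCol Unit (fun _ : V => -c)).det
      = 1 - c * (Fintype.card V) * s₀⁻¹ := by
    rw [Matrix.det_unique]
    simp only [Matrix.add_apply, Matrix.one_apply_eq, Matrix.mul_apply, Matrix.replicateRow_apply,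
      Matrix.replicateCol_apply, one_mul, Finset.univ_unique, Finset.sum_singleton]
    simp only [Finset.sum_mul]
    rw [Finset.sum_comm]
    have h6 : ∀ u : V, (u ∈ Finset.univ) → (∑ v : V, B⁻¹ u v * -c) = s₀⁻¹ * -c := by
      intro u _
      rw [← Finset.sum_mul, hsum u]
    calc (1:ℝ) + ∑ u : V, ∑ v : V, B⁻¹ u v * -c
        = 1 + ∑ u : V, s₀⁻¹ * -c := by
          rw [Finset.sum_congr rfl h6]
      _ = _ := by rw [Finset.sum_const, Finset.card_univ]; simp; ring
  rw [Matrix.det_add_replicateCol_mul_replicateRow hd, hdet2]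
  field_simp

end Helpers

section GraphFacts
variable {V : Type*} [Fintype V] (G : SimpleGraph V)

lemma joinAdj_ll (u v : V) :
    (joinGraph G (⊥ : SimpleGraph Unit)).Adj (Sum.inl u) (Sum.inl v) ↔ G.Adj u v := by
  simp only [joinGraph, SimpleGraph.fromRel_adj]
  constructor
  · rintro ⟨h, h1 | h1⟩ <;> [exact h1; exact h1.symm]
  · intro h; exact ⟨by simp [h.ne], Or.inl h⟩

lemma joinAdj_lr (u : V) (t : Unit) :
    (joinGraph G (⊥ : SimpleGraph Unit)).Adj (Sum.inl u) (Sum.inr t) := by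
  simp [joinGraph, SimpleGraph.fromRel_adj]

lemma joinAdj_rr (t t' : Unit) :
    ¬ (joinGraph G (⊥ : SimpleGraph Unit)).Adj (Sum.inr t) (Sum.inr t') := by
  simp [joinGraph, SimpleGraph.fromRel_adj]

end GraphFacts

section GraphFacts2
open SimpleGraph
variable {V : Type*} [Fintype V] (G : SimpleGraph V)

lemma join_dist_lr (u : V) (t : Unit) :
    (joinGraph G (⊥ : SimpleGraph Unit)).dist (Sum.inl u) (Sum.inr t) = 1 :=
  SimpleGraph.dist_eq_one_iff_adj.mpr (joinAdj_lr G u t)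

lemma join_dist_rl (u : V) (t : Unit) :
    (joinGraph G (⊥ : SimpleGraph Unit)).dist (Sum.inr t) (Sum.inl u) = 1 :=
  SimpleGraph.dist_eq_one_iff_adj.mpr (joinAdj_lr G u t).symm

lemma join_dist_ll (u v : V) (huv : u ≠ v) (hadj : ¬ G.Adj u v) :
    (joinGraph G (⊥ : SimpleGraph Unit)).dist (Sum.inl u) (Sum.inl v) = 2 := by
  set H := joinGraph G (⊥ : SimpleGraph Unit) with hH
  let hw : H.Walk (Sum.inl u) (Sum.inl v) :=
    SimpleGraph.Walk.cons (joinAdj_lr G u ()) (SimpleGraph.Walk.cons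
      ((joinAdj_lr G v ()).symm) SimpleGraph.Walk.nil)
  have hle : H.dist (Sum.inl u) (Sum.inl v) ≤ 2 := by
    have := SimpleGraph.dist_le hw
    simpa [hw] using this
  have hne0 : H.dist (Sum.inl u) (Sum.inl v) ≠ 0 := by
    intro h
    have := (SimpleGraph.Reachable.dist_eq_zero_iff ⟨hw⟩).mp h
    simp only [Sum.inl.injEq] at this
    exact huv this
  have hne1 : H.dist (Sum.inl u) (Sum.inl v) ≠ 1 := by
    intro h
    exact hadj ((joinAdj_ll G u v).mp (SimpleGraph.dist_eq_one_iff_adj.mp h))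
  omega

lemma join_ecc_r [Nonempty V] (t : Unit) :
    ecc (joinGraph G (⊥ : SimpleGraph Unit)) (Sum.inr t) = 1 := by
  apply le_antisymm
  · apply Finset.sup_le
    rintro (u | t') _
    · rw [join_dist_rl]
    · have : t' = t := rfl
      subst this
      rw [SimpleGraph.dist_self]
      omega
  · obtain ⟨u⟩ := ‹Nonempty V›
    have := Finset.le_sup (f := fun w => (joinGraph G (⊥ : SimpleGraph Unit)).dist (Sum.inr t) w)
      (Finset.mem_univ (Sum.inl u))
    simpa only [ecc, join_dist_rl] using this

lemma join_ecc_l (u : V) (hnonadj : ∃ v, v ≠ u ∧ ¬ G.Adj u v) :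
    ecc (joinGraph G (⊥ : SimpleGraph Unit)) (Sum.inl u) = 2 := by
  apply le_antisymm
  · apply Finset.sup_le
    rintro (v | t') _
    · by_cases h : u = v
      · subst h; rw [SimpleGraph.dist_self]; omega
      · by_cases h2 : G.Adj u v
        · rw [SimpleGraph.dist_eq_one_iff_adj.mpr ((joinAdj_ll G u v).mpr h2)]; omega
        · rw [join_dist_ll G u v h h2]
    · rw [join_dist_lr]; omega
  · obtain ⟨v, hvu, hv⟩ := hnonadj
    have := Finset.le_sup (f := fun w => (joinGraph G (⊥ : SimpleGraph Unit)).dist (Sum.inl u) w)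
      (Finset.mem_univ (Sum.inl v))
    simpa only [ecc, join_dist_ll G u v (Ne.symm hvu) hv] using this

lemma eccM_form [Nonempty V]
    (hnonadj : ∀ u : V, ∃ v, v ≠ u ∧ ¬ G.Adj u v) :
    eccMatrix (joinGraph G (⊥ : SimpleGraph Unit)) = Matrix.fromBlocks
      (Matrix.of fun u v : V => if u ≠ v ∧ ¬ G.Adj u v then (2:ℝ) else 0)
      (Matrix.replicateCol Unit (fun _ : V => 1)) (Matrix.replicateRow Unit (fun _ : V => 1)) 0 := by
  ext i j
  rcases i with u | t <;> rcases j with v | t'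
  · simp only [eccMatrix]
    simp only [join_ecc_l G u (hnonadj u), join_ecc_l G v (hnonadj v), min_self]
    by_cases h : u = v
    · subst h
      simp [SimpleGraph.dist_self, Matrix.fromBlocks]
    · by_cases h2 : G.Adj u v
      · rw [SimpleGraph.dist_eq_one_iff_adj.mpr ((joinAdj_ll G u v).mpr h2)]
        simp [Matrix.fromBlocks, h, h2]
      · rw [join_dist_ll G u v h h2]
        simp [Matrix.fromBlocks, h, h2]
  · simp only [eccMatrix]
    simp only [join_ecc_l G u (hnonadj u), join_ecc_r, join_dist_lr]
    norm_num [Matrix.fromBlocks]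
  · simp only [eccMatrix]
    simp only [join_ecc_l G v (hnonadj v), join_ecc_r, join_dist_rl]
    norm_num [Matrix.fromBlocks]
  · simp only [eccMatrix]
    have : t' = t := rfl
    subst this
    simp only [join_ecc_r, SimpleGraph.dist_self, min_self]
    norm_num [Matrix.fromBlocks]

end GraphFacts2

/-- For an `r`-regular non-complete connected graph `G` on `p` vertices with
adjacency spectrum `{r} ∪ μ`, the eccentricity matrix of `G ∨ K₁` has spectrum
`{(p-r-1) ± √((p-r-1)² + p)} ∪ {-2(λ+1) : λ ∈ μ}`. -/
theorem stmt0 {V : Type*} [Fintype V] (G : SimpleGraph V) (p r : ℕ)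
    (hp : Fintype.card V = p) (hconn : G.Connected) (hreg : G.IsRegularOfDegree r)
    (hnc : G ≠ ⊤) (μ : Multiset ℝ)
    (hspec : (G.adjMatrix ℝ).charpoly.roots = (r : ℝ) ::ₘ μ) :
    (eccMatrix (joinGraph G (⊥ : SimpleGraph Unit))).charpoly.roots =
      (((p : ℝ) - r - 1) + Real.sqrt (((p : ℝ) - r - 1) ^ 2 + p)) ::ₘ
        (((p : ℝ) - r - 1) - Real.sqrt (((p : ℝ) - r - 1) ^ 2 + p)) ::ₘ
          μ.map (fun x => -2 * (x + 1)) := by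
  haveI hV : Nonempty V := hconn.nonempty
  obtain ⟨a, b0, hab, hnab⟩ : ∃ a b : V, a ≠ b ∧ ¬ G.Adj a b := by
    by_contra h
    push_neg at h
    apply hnc
    ext u v
    simp only [SimpleGraph.top_adj]
    exact ⟨fun h' => h'.ne, fun h' => h u v h'⟩
  have hrp : r + 2 ≤ p := by
    have hsub : G.neighborFinset a ⊆ (Finset.univ.erase b0).erase a := by
      intro v hv
      rw [SimpleGraph.mem_neighborFinset] at hv
      apply Finset.mem_erase.mpr
      refine ⟨fun hva => ?_, Finset.mem_erase.mpr ⟨fun hvb => ?_, Finset.mem_univ v⟩⟩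
      · exact G.irrefl (hva ▸ hv)
      · exact hnab (hvb ▸ hv)
    have hcle := Finset.card_le_card hsub
    rw [SimpleGraph.card_neighborFinset_eq_degree, hreg a] at hcle
    have hmem : a ∈ Finset.univ.erase b0 := Finset.mem_erase.mpr ⟨hab, Finset.mem_univ a⟩
    rw [Finset.card_erase_of_mem hmem, Finset.card_erase_of_mem (Finset.mem_univ b0),
      Finset.card_univ, hp] at hcle
    have hple : 2 ≤ p := by
      rw [← hp]
      exact Fintype.one_lt_card_iff_nontrivial.mpr ⟨⟨a, b0, hab⟩⟩
    omega
  have hnonadj : ∀ u : V, ∃ v, v ≠ u ∧ ¬ G.Adj u v := by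
    intro u
    by_contra h
    push_neg at h
    have hsub : Finset.univ.erase u ⊆ G.neighborFinset u := by
      intro v hv
      rw [SimpleGraph.mem_neighborFinset]
      exact h v (Finset.mem_erase.mp hv).1
    have hcle := Finset.card_le_card hsub
    rw [SimpleGraph.card_neighborFinset_eq_degree, hreg u,
      Finset.card_erase_of_mem (Finset.mem_univ u), Finset.card_univ, hp] at hcle
    omega
  -- spectral facts for the adjacency matrix
  set Aadj : Matrix V V ℝ := G.adjMatrix ℝ with hAadjdef
  have hherm : Aadj.IsHermitian := by
    ext i j
    simp only [Matrix.conjTranspose_apply, hAadjdef, SimpleGraph.adjMatrix_apply, star_trivial]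
    rw [SimpleGraph.adj_comm]
  obtain ⟨hsplit, hcard⟩ := charpoly_roots_herm Aadj hherm
  set mult : Multiset ℝ := (r : ℝ) ::ₘ μ with hmultdef
  have hroots : Aadj.charpoly.roots = mult := hspec
  have hcardm : Multiset.card mult = p := by
    rw [← hroots, hcard, hp]
  have hevalA : ∀ t : ℝ, Aadj.charpoly.eval t = (mult.map (fun l => t - l)).prod := by
    intro t
    conv_lhs => rw [hsplit, hroots]
    rw [Polynomial.eval_multiset_prod, Multiset.map_map]
    congr 1
    apply Multiset.map_congr rfl
    intro l _
    simp
  set b : ℝ := (p : ℝ) - r - 1 with hbdef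
  set sq : ℝ := Real.sqrt (((p : ℝ) - r - 1) ^ 2 + p) with hsqdef
  have hsq2 : sq * sq = b ^ 2 + p := by
    rw [hsqdef, hbdef]
    exact Real.mul_self_sqrt (by positivity)
  -- main pointwise determinant identity
  have main : ∀ x : ℝ, x ≠ 0 → (∀ l ∈ mult, x + 2 + 2 * l ≠ 0) →
      (eccMatrix (joinGraph G (⊥ : SimpleGraph Unit))).charpoly.eval x * (x + 2 + 2 * (r:ℝ))
        = ((x - (b + sq)) * (x - (b - sq))) * (mult.map (fun l => x + 2 + 2 * l)).prod := by
    intro x hx0 hxl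
    set B₀ : Matrix V V ℝ := (x + 2) • (1 : Matrix V V ℝ) + 2 • Aadj with hB₀def
    have hdetB₀ : B₀.det = (mult.map (fun l => x + 2 + 2 * l)).prod := by
      have h1 : B₀ = (-2 : ℝ) • ((-(x+2)/2) • (1 : Matrix V V ℝ) - Aadj) := by
        ext i j
        simp only [hB₀def, Matrix.add_apply, Matrix.smul_apply, Matrix.sub_apply,
          Matrix.one_apply, smul_eq_mul]
        split_ifs <;> ring
      rw [h1, Matrix.det_smul, ← eval_charpoly', hevalA]
      have h2 : (mult.map (fun l => x + 2 + 2 * l))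
          = mult.map (fun l => (-2 : ℝ) * ((-(x+2)/2) - l)) := by
        apply Multiset.map_congr rfl
        intro l _
        ring
      rw [h2, Multiset.prod_map_mul, Multiset.map_const', Multiset.prod_replicate, hcardm, hp]
    have hdetne : B₀.det ≠ 0 := by
      rw [hdetB₀]
      apply Multiset.prod_ne_zero
      intro h0
      obtain ⟨l, hl, hl0⟩ := Multiset.mem_map.mp h0
      exact hxl l hl hl0
    have hs₀ : x + 2 + 2 * (r:ℝ) ≠ 0 := hxl (r:ℝ) (Multiset.mem_cons_self _ _)
    have hrowsum : B₀ *ᵥ (fun _ => (1:ℝ)) = fun _ => (x + 2 + 2 * (r:ℝ)) := by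
      funext v
      have hadj : (Aadj *ᵥ (fun _ => (1:ℝ))) v = (r : ℝ) * 1 :=
        SimpleGraph.adjMatrix_mulVec_const_apply_of_regular hreg
      simp only [hB₀def, Matrix.add_mulVec, Matrix.smul_mulVec, Matrix.one_mulVec,
        Pi.add_apply, Pi.smul_apply, smul_eq_mul] at *
      rw [hadj]
      ring
    -- block decomposition
    have hM := eccM_form G hnonadj
    set M₀ : Matrix V V ℝ :=
      Matrix.of fun u v : V => if u ≠ v ∧ ¬ G.Adj u v then (2:ℝ) else 0 with hM₀def
    set D : Matrix Unit Unit ℝ := Matrix.of (fun _ _ => x) with hDdef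
    letI : Invertible D := ⟨Matrix.of (fun _ _ => x⁻¹), by
        ext i j
        simp [hDdef, Matrix.mul_apply, Matrix.one_apply, inv_mul_cancel₀ hx0, Subsingleton.elim i j], by
        ext i j
        simp [hDdef, Matrix.mul_apply, Matrix.one_apply, mul_inv_cancel₀ hx0, Subsingleton.elim i j]⟩
    have hblock : x • (1 : Matrix (V ⊕ Unit) (V ⊕ Unit) ℝ)
        - eccMatrix (joinGraph G (⊥ : SimpleGraph Unit))
        = Matrix.fromBlocks (x • (1 : Matrix V V ℝ) - M₀)
          (- Matrix.replicateCol Unit (fun _ : V => (1:ℝ))) (- Matrix.replicateRow Unit (fun _ : V => (1:ℝ))) D := by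
      rw [hM]
      ext i j
      rcases i with u | t <;> rcases j with v | t' <;>
        simp [Matrix.fromBlocks, Matrix.sub_apply, Matrix.smul_apply, Matrix.one_apply,
          Matrix.replicateCol_apply, Matrix.replicateRow_apply, hDdef]
    have hinvD : ⅟D = Matrix.of (fun _ _ : Unit => x⁻¹) := rfl
    have hinner : (x • (1 : Matrix V V ℝ) - M₀)
        - (- Matrix.replicateCol Unit (fun _ : V => (1:ℝ))) * ⅟D * (- Matrix.replicateRow Unit (fun _ : V => (1:ℝ)))
        = B₀ + Matrix.replicateCol Unit (fun _ : V => -(2 + x⁻¹)) * Matrix.replicateRow Unit (fun _ : V => (1:ℝ)) := by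
      ext u v
      simp only [Matrix.sub_apply, Matrix.add_apply, Matrix.smul_apply, Matrix.one_apply,
        Matrix.mul_apply, Matrix.replicateCol_apply, Matrix.replicateRow_apply, Matrix.neg_apply, hinvD,
        Matrix.of_apply, Finset.univ_unique, Finset.sum_singleton, hB₀def, hM₀def,
        smul_eq_mul, SimpleGraph.adjMatrix_apply, hAadjdef]
      by_cases h : u = v
      · subst h
        simp only [G.irrefl]
        simp
        ring
      · by_cases h2 : G.Adj u v
        · simp [h, h2]
          try ring
        · simp [h, h2]
          try ring
    have hDdet : D.det = x := by rw [Matrix.det_unique]; rfl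
    have hupd := det_rank_one_update B₀ (2 + x⁻¹) (x + 2 + 2 * (r:ℝ))
      (isUnit_iff_ne_zero.mpr hdetne) hs₀ hrowsum
    rw [hp] at hupd
    have hxc : x * ((x + 2 + 2 * (r:ℝ)) - (2 + x⁻¹) * (p:ℝ))
        = (x - (b + sq)) * (x - (b - sq)) := by
      have hexp : (x - (b + sq)) * (x - (b - sq)) = x^2 - 2*b*x + (b^2 - sq * sq) := by ring
      rw [hexp, hsq2, hbdef]
      field_simp
      ring
    calc (eccMatrix (joinGraph G (⊥ : SimpleGraph Unit))).charpoly.eval x * (x + 2 + 2 * (r:ℝ))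
        = (x • (1 : Matrix (V ⊕ Unit) (V ⊕ Unit) ℝ)
            - eccMatrix (joinGraph G (⊥ : SimpleGraph Unit))).det * (x + 2 + 2 * (r:ℝ)) := by
          rw [eval_charpoly']
      _ = (D.det * ((B₀ + Matrix.replicateCol Unit (fun _ : V => -(2 + x⁻¹))
            * Matrix.replicateRow Unit (fun _ : V => (1:ℝ))).det)) * (x + 2 + 2 * (r:ℝ)) := by
          rw [hblock, Matrix.det_fromBlocks₂₂, hinner]
      _ = x * ((B₀ + Matrix.replicateCol Unit (fun _ : V => -(2 + x⁻¹))
            * Matrix.replicateRow Unit (fun _ : V => (1:ℝ))).det * (x + 2 + 2 * (r:ℝ))) := by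
          rw [hDdet]; ring
      _ = x * (B₀.det * ((x + 2 + 2 * (r:ℝ)) - (2 + x⁻¹) * (p:ℝ))) := by rw [hupd]
      _ = (x * ((x + 2 + 2 * (r:ℝ)) - (2 + x⁻¹) * (p:ℝ))) * B₀.det := by ring
      _ = ((x - (b + sq)) * (x - (b - sq))) * (mult.map (fun l => x + 2 + 2 * l)).prod := by
          rw [hxc, hdetB₀]
  classical
  set P := (eccMatrix (joinGraph G (⊥ : SimpleGraph Unit))).charpoly with hPdef
  set prodpoly : Polynomial ℝ :=
    ((μ.map (fun l => -2 - 2 * l)).map (fun a => Polynomial.X - Polynomial.C a)).prod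
    with hprodpolydef
  have hprodmonic : prodpoly.Monic :=
    Polynomial.monic_multiset_prod_of_monic _ _ (fun a _ => Polynomial.monic_X_sub_C a)
  set Q := (Polynomial.X - Polynomial.C (b + sq)) * (Polynomial.X - Polynomial.C (b - sq))
    * prodpoly with hQdef
  have hPQ : P * (Polynomial.X - Polynomial.C (-2 - 2 * (r:ℝ)))
      = Q * (Polynomial.X - Polynomial.C (-2 - 2 * (r:ℝ))) := by
    apply Polynomial.eq_of_infinite_eval_eq
    set bad : Finset ℝ := insert (0:ℝ) (mult.map (fun l => -2 - 2 * l)).toFinset with hbaddef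
    apply Set.Infinite.mono (s := (↑bad : Set ℝ)ᶜ)
    swap
    · exact (bad.finite_toSet).infinite_compl
    intro x hx
    simp only [hbaddef, Set.mem_compl_iff, Finset.coe_insert, Set.mem_insert_iff,
      Finset.mem_coe, Multiset.mem_toFinset, Multiset.mem_map, not_or, not_exists, not_and] at hx
    obtain ⟨hx0, hx1⟩ := hx
    have hxl : ∀ l ∈ mult, x + 2 + 2 * l ≠ 0 := by
      intro l hl h0
      exact hx1 l hl (by linarith)
    have hmain := main x hx0 hxl
    show _ = _
    simp only [Set.mem_setOf_eq, Polynomial.eval_mul, Polynomial.eval_sub,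
      Polynomial.eval_X, Polynomial.eval_C]
    have hprodeval : prodpoly.eval x = (μ.map (fun l => x + 2 + 2 * l)).prod := by
      rw [hprodpolydef, Polynomial.eval_multiset_prod, Multiset.map_map, Multiset.map_map]
      congr 1
      apply Multiset.map_congr rfl
      intro l _
      simp only [Function.comp_apply, Polynomial.eval_sub, Polynomial.eval_X, Polynomial.eval_C]
      ring
    have hmultprod : (mult.map (fun l => x + 2 + 2 * l)).prod
        = (x + 2 + 2 * (r:ℝ)) * (μ.map (fun l => x + 2 + 2 * l)).prod := by
      rw [hmultdef, Multiset.map_cons, Multiset.prod_cons]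
    rw [show x - (-2 - 2 * (r:ℝ)) = x + 2 + 2 * (r:ℝ) by ring, hmain, hmultprod, hQdef]
    simp only [Polynomial.eval_mul, Polynomial.eval_sub, Polynomial.eval_X, Polynomial.eval_C,
      hprodeval]
    ring
  have hcancel : P = Q := mul_right_cancel₀ (Polynomial.X_sub_C_ne_zero _) hPQ
  have hprodne : prodpoly ≠ 0 := hprodmonic.ne_zero
  rw [hcancel, hQdef]
  rw [Polynomial.roots_mul (mul_ne_zero (mul_ne_zero (Polynomial.X_sub_C_ne_zero _)
    (Polynomial.X_sub_C_ne_zero _)) hprodne),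
    Polynomial.roots_mul (mul_ne_zero (Polynomial.X_sub_C_ne_zero _)
    (Polynomial.X_sub_C_ne_zero _)),
    Polynomial.roots_X_sub_C, Polynomial.roots_X_sub_C, hprodpolydef,
    Polynomial.roots_multiset_prod_X_sub_C]
  have hμ : μ.map (fun l : ℝ => -2 - 2 * l) = μ.map (fun x : ℝ => -2 * (x + 1)) :=
    Multiset.map_congr rfl (fun l _ => by ring)
  rw [hμ, add_assoc, Multiset.singleton_add, Multiset.singleton_add]
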